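/- Let 𝒱₁ be the set of all value functions that are convex on (−∞,0] and convex on [0,∞), 𝒲_con the set of all convex weighting functions, and 𝒲_cav the set of all concave weighting functions. Let T := { (v, w⁻, w⁺) ∈ 𝒱₁ × 𝒲_con × 𝒲_cav : v'₊(0)/v'₋(0) ≥ sup_{p∈(0,1)} (w⁻)'₋(p) / (1 − w⁺(1−·))'₊(p) }, where v'₋(0), v'₊(0) are the left and right derivatives of v at 0 and (w⁻)'₋(p), (1 − w⁺(1−·))'₊(p) are the left and right derivatives of w⁻ and of p ↦ 1 − w⁺(1−p) at p (these one-sided derivatives exist by convexity/concavity). Let ℛ_con be the set of triples (v, w⁻, w⁺) of a value function and two weighting functions for which ρ_{(v,w⁻,w⁺)} is a convex risk measure on bounded random variables. Then for every bounded random variable ξ, inf { x ∈ ℝ : E_{w⁻w⁺}[v(ξ − x)] ≤ 0 for all (v,w⁻,w⁺) ∈ T } = sup_{(v,w⁻,w⁺) ∈ ℛ_con} ρ_{(v,w⁻,w⁺)}(ξ). -/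

import Mathlib

open MeasureTheory Set

noncomputable section

/-- A value function: strictly increasing `v : ℝ → ℝ` with `v 0 = 0`. -/
def IsValueFun (v : ℝ → ℝ) : Prop := StrictMono v ∧ v 0 = 0

/-- A weighting function: a strictly increasing `w : [0,1] → [0,1]`
with `w 0 = 0` and `w 1 = 1`. -/
def IsWeightFun (w : ℝ → ℝ) : Prop :=
  StrictMonoOn w (Icc 0 1) ∧ MapsTo w (Icc 0 1) (Icc 0 1) ∧ w 0 = 0 ∧ w 1 = 1

/-- The CPT distorted expectation
`E_{w⁻w⁺}[v(ζ)] = ∫₀^∞ w⁺(ℙ(v(ζ) ≥ t)) dt − ∫₀^∞ w⁻(ℙ(v(ζ) ≤ −t)) dt`. -/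
def cptE {Ω : Type*} [MeasurableSpace Ω] (P : Measure Ω)
    (v wm wp : ℝ → ℝ) (ζ : Ω → ℝ) : ℝ :=
  (∫ t in Ioi (0:ℝ), wp (P {ω | t ≤ v (ζ ω)}).toReal)
    - ∫ t in Ioi (0:ℝ), wm (P {ω | v (ζ ω) ≤ -t}).toReal

/-- Both integrals defining the CPT distorted expectation are finite. -/
def CptWellDef {Ω : Type*} [MeasurableSpace Ω] (P : Measure Ω)
    (v wm wp : ℝ → ℝ) (ζ : Ω → ℝ) : Prop :=
  IntegrableOn (fun t => wp (P {ω | t ≤ v (ζ ω)}).toReal) (Ioi 0) ∧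
    IntegrableOn (fun t => wm (P {ω | v (ζ ω) ≤ -t}).toReal) (Ioi 0)

/-- The generalized shortfall risk measure (GSR-CPT):
`ρ_{(v,w⁻,w⁺)}(ξ) = inf { x : E_{w⁻w⁺}[v(ξ − x)] ≤ 0 }`, with `inf ∅ = +∞`. -/
def gsr {Ω : Type*} [MeasurableSpace Ω] (P : Measure Ω)
    (v wm wp : ℝ → ℝ) (ξ : Ω → ℝ) : EReal :=
  sInf ((fun x : ℝ => (x : EReal)) ''
    {x : ℝ | cptE P v wm wp (fun ω => ξ ω - x) ≤ 0})

/-- A bounded random variable. -/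
def IsBddRV {Ω : Type*} [MeasurableSpace Ω] (ξ : Ω → ℝ) : Prop :=
  Measurable ξ ∧ ∃ M : ℝ, ∀ ω, |ξ ω| ≤ M

/-- A weighting function which is continuously differentiable on `[0,1]`
with strictly positive derivative. -/
def SmoothWeight (w : ℝ → ℝ) : Prop :=
  IsWeightFun w ∧ ContDiffOn ℝ 1 w (Icc 0 1) ∧
    ∀ p ∈ Icc (0:ℝ) 1, 0 < derivWithin w (Icc 0 1) p

/-- Left derivative. -/
def leftD (f : ℝ → ℝ) (x : ℝ) : ℝ := derivWithin f (Iio x) x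

/-- Right derivative. -/
def rightD (f : ℝ → ℝ) (x : ℝ) : ℝ := derivWithin f (Ioi x) x

/-- A convex risk measure on bounded random variables: monotone, translation
invariant and convex. -/
def IsConvexRM {Ω : Type*} [MeasurableSpace Ω] (ρ : (Ω → ℝ) → EReal) : Prop :=
  (∀ ξ η : Ω → ℝ, IsBddRV ξ → IsBddRV η → (∀ ω, ξ ω ≤ η ω) → ρ ξ ≤ ρ η) ∧
  (∀ ξ : Ω → ℝ, IsBddRV ξ → ∀ c : ℝ,
    ρ (fun ω => ξ ω + c) = ρ ξ + (c : EReal)) ∧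
  (∀ ξ η : Ω → ℝ, IsBddRV ξ → IsBddRV η → ∀ l : ℝ, l ∈ Icc (0:ℝ) 1 →
    ρ (fun ω => l * ξ ω + (1 - l) * η ω)
      ≤ (l : EReal) * ρ ξ + ((1 - l : ℝ) : EReal) * ρ η)

/-- The set `T` of triples `(v, w⁻, w⁺)` with `v` a value function convex on
`(-∞,0]` and on `[0,∞)`, `w⁻` a convex weighting function, `w⁺` a concave
weighting function, satisfying the slope condition
`v'₊(0)/v'₋(0) ≥ sup_{p∈(0,1)} (w⁻)'₋(p)/(1 − w⁺(1−·))'₊(p)`. -/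
def convexTuples : Set ((ℝ → ℝ) × (ℝ → ℝ) × (ℝ → ℝ)) :=
  {vw | IsValueFun vw.1 ∧ ConvexOn ℝ (Iic 0) vw.1 ∧ ConvexOn ℝ (Ici 0) vw.1 ∧
    IsWeightFun vw.2.1 ∧ ConvexOn ℝ (Icc 0 1) vw.2.1 ∧
    IsWeightFun vw.2.2 ∧ ConcaveOn ℝ (Icc 0 1) vw.2.2 ∧
    (⨆ p : (Ioo (0:ℝ) 1),
        leftD vw.2.1 ↑p / rightD (fun q => 1 - vw.2.2 (1 - q)) ↑p)
      ≤ rightD vw.1 0 / leftD vw.1 0}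

namespace PRGSRaux
open Filter Topology


/-- value function with a jump at `0⁺`, bounded below by `-1/4`. -/
def v0 : ℝ → ℝ := fun y => if y ≤ 0 then y / (4 * (1 - y)) else y + 1

/-- concave weighting function with jump at `0⁺`. -/
def wp0 : ℝ → ℝ := fun p => (1 + p) / 2 - (1 / 2) * (if p ≤ 0 then 1 else 0)

/-- convex weighting function with slope `γ` and jump at `1⁻`. -/
def wmg (γ : ℝ) : ℝ → ℝ := fun p => γ * p + (1 - γ) * (if 1 ≤ p then 1 else 0)

lemma v0_zero : v0 0 = 0 := by simp [v0]

lemma v0_of_pos {y : ℝ} (h : 0 < y) : v0 y = y + 1 := by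
  simp [v0, not_le.mpr h]

lemma v0_nonpos {y : ℝ} (h : y ≤ 0) : v0 y ≤ 0 := by
  rw [v0]; simp only [if_pos h]
  have hd : (0:ℝ) < 4 * (1 - y) := by nlinarith
  exact div_nonpos_of_nonpos_of_nonneg h hd.le

lemma v0_strictMono : StrictMono v0 := by
  intro a b hab
  rcases le_or_gt b 0 with hb | hb
  · have ha : a ≤ 0 := hab.le.trans hb
    rw [v0]; simp only [if_pos ha, if_pos hb, v0]
    rw [div_lt_div_iff₀ (by nlinarith) (by nlinarith)]
    nlinarith
  · rcases le_or_gt a 0 with ha | ha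
    · calc v0 a ≤ 0 := v0_nonpos ha
        _ < b + 1 := by nlinarith
        _ = v0 b := (v0_of_pos hb).symm
    · rw [v0_of_pos ha, v0_of_pos hb]; linarith

lemma v0_gt {y : ℝ} : -(1/4 : ℝ) < v0 y := by
  rcases le_or_gt y 0 with h | h
  · rw [v0]; simp only [if_pos h]
    rw [lt_div_iff₀ (by nlinarith)]; nlinarith
  · rw [v0_of_pos h]; nlinarith

lemma wp0_zero : wp0 0 = 0 := by norm_num [wp0]
lemma wp0_one : wp0 1 = 1 := by norm_num [wp0]

lemma wp0_of_pos {p : ℝ} (h : 0 < p) : wp0 p = (1 + p) / 2 := by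
  simp [wp0, not_le.mpr h]

lemma wp0_nonneg {p : ℝ} (h : 0 ≤ p) : 0 ≤ wp0 p := by
  rcases eq_or_lt_of_le h with rfl | h'
  · rw [wp0_zero]
  · rw [wp0_of_pos h']; linarith

lemma wp0_le_one {p : ℝ} (h0 : 0 ≤ p) (h1 : p ≤ 1) : wp0 p ≤ 1 := by
  rcases eq_or_lt_of_le h0 with rfl | h'
  · rw [wp0_zero]; norm_num
  · rw [wp0_of_pos h']; linarith

lemma wp0_mono {a b : ℝ} (h0 : 0 ≤ a) (hab : a ≤ b) : wp0 a ≤ wp0 b := by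
  rcases eq_or_lt_of_le h0 with rfl | h'
  · rw [wp0_zero]; exact wp0_nonneg (le_trans h0 hab)
  · rw [wp0_of_pos h', wp0_of_pos (h'.trans_le hab)]; linarith

lemma wp0_half {p : ℝ} (h : 0 < p) : 1/2 ≤ wp0 p := by
  rw [wp0_of_pos h]; linarith

lemma wmg_zero {γ : ℝ} : wmg γ 0 = 0 := by norm_num [wmg]
lemma wmg_one {γ : ℝ} : wmg γ 1 = 1 := by norm_num [wmg]

lemma wmg_of_lt_one {γ p : ℝ} (h : p < 1) : wmg γ p = γ * p := by
  simp [wmg, not_le.mpr h]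

lemma wmg_mono {γ : ℝ} (h0 : 0 ≤ γ) (h1 : γ ≤ 1) : Monotone (wmg γ) := by
  intro a b hab
  rw [wmg, wmg]
  have : (if (1:ℝ) ≤ a then (1:ℝ) else 0) ≤ (if (1:ℝ) ≤ b then (1:ℝ) else 0) := by
    by_cases ha : (1:ℝ) ≤ a
    · rw [if_pos ha, if_pos (ha.trans hab)]
    · rw [if_neg ha]
      by_cases hb : (1:ℝ) ≤ b <;> simp [hb]
  nlinarith

lemma wmg_nonneg {γ p : ℝ} (h0 : 0 ≤ γ) (h1 : γ ≤ 1) (hp : 0 ≤ p) : 0 ≤ wmg γ p := by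
  rw [wmg]
  have : (0:ℝ) ≤ (if (1:ℝ) ≤ p then (1:ℝ) else 0) := by positivity
  nlinarith

lemma wmg_le_one {γ p : ℝ} (h0 : 0 ≤ γ) (h1 : γ ≤ 1) (hp0 : 0 ≤ p) (hp1 : p ≤ 1) :
    wmg γ p ≤ 1 := by
  rw [wmg]
  by_cases h : (1:ℝ) ≤ p
  · rw [if_pos h]; nlinarith
  · rw [if_neg h]; nlinarith

lemma isWeightFun_wmg {γ : ℝ} (h0 : 0 < γ) (h1 : γ ≤ 1/4) :
    StrictMonoOn (wmg γ) (Icc 0 1) ∧ MapsTo (wmg γ) (Icc 0 1) (Icc 0 1)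
      ∧ wmg γ 0 = 0 ∧ wmg γ 1 = 1 := by
  refine ⟨?_, ?_, wmg_zero, wmg_one⟩
  · intro a ha b hb hab
    rcases eq_or_lt_of_le hb.2 with rfl | hb1
    · rw [wmg_of_lt_one hab, wmg_one]; nlinarith [ha.1]
    · rw [wmg_of_lt_one (hab.trans hb1), wmg_of_lt_one hb1]; nlinarith
  · intro p hp
    exact ⟨wmg_nonneg h0.le (by linarith) hp.1, wmg_le_one h0.le (by linarith) hp.1 hp.2⟩

lemma isWeightFun_wp0 :
    StrictMonoOn wp0 (Icc 0 1) ∧ MapsTo wp0 (Icc 0 1) (Icc 0 1)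
      ∧ wp0 0 = 0 ∧ wp0 1 = 1 := by
  refine ⟨?_, ?_, wp0_zero, wp0_one⟩
  · intro a ha b hb hab
    rcases eq_or_lt_of_le ha.1 with rfl | ha0
    · rw [wp0_zero, wp0_of_pos (ha.1.trans_lt hab)]
      linarith [hab, ha.1]
    · rw [wp0_of_pos ha0, wp0_of_pos (ha0.trans hab)]; linarith
  · intro p hp; exact ⟨wp0_nonneg hp.1, wp0_le_one hp.1 hp.2⟩
lemma convexOn_wmg {γ : ℝ} (h0 : 0 ≤ γ) (h1 : γ ≤ 1) :
    ConvexOn ℝ (Icc 0 1) (wmg γ) := by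
  refine ⟨convex_Icc 0 1, fun x hx y hy a b ha hb hab => ?_⟩
  simp only [smul_eq_mul, wmg]
  have key : (if (1:ℝ) ≤ a*x + b*y then (1:ℝ) else 0)
      ≤ a * (if (1:ℝ) ≤ x then (1:ℝ) else 0) + b * (if (1:ℝ) ≤ y then (1:ℝ) else 0) := by
    by_cases hc : (1:ℝ) ≤ a*x + b*y
    · rw [if_pos hc]
      have h2 : a * (1 - x) + b * (1 - y) ≤ 0 := by nlinarith [hx.2, hy.2]
      have hax : a * (1 - x) = 0 := by nlinarith [mul_nonneg ha (sub_nonneg.mpr hx.2), mul_nonneg hb (sub_nonneg.mpr hy.2)]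
      have hby : b * (1 - y) = 0 := by nlinarith [mul_nonneg ha (sub_nonneg.mpr hx.2), mul_nonneg hb (sub_nonneg.mpr hy.2)]
      have e1 : a * (if (1:ℝ) ≤ x then (1:ℝ) else 0) = a := by
        rcases mul_eq_zero.mp hax with h | h
        · simp [h]
        · have : x = 1 := by linarith
          simp [this]
      have e2 : b * (if (1:ℝ) ≤ y then (1:ℝ) else 0) = b := by
        rcases mul_eq_zero.mp hby with h | h
        · simp [h]
        · have : y = 1 := by linarith
          simp [this]
      rw [e1, e2, hab]
    · rw [if_neg hc]
      have i1 : (0:ℝ) ≤ (if (1:ℝ) ≤ x then (1:ℝ) else 0) := by positivity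
      have i2 : (0:ℝ) ≤ (if (1:ℝ) ≤ y then (1:ℝ) else 0) := by positivity
      nlinarith
  nlinarith

lemma concaveOn_wp0 : ConcaveOn ℝ (Icc 0 1) wp0 := by
  refine ⟨convex_Icc 0 1, fun x hx y hy a b ha hb hab => ?_⟩
  simp only [smul_eq_mul, wp0]
  have key : (if a*x + b*y ≤ 0 then (1:ℝ) else 0)
      ≤ a * (if x ≤ 0 then (1:ℝ) else 0) + b * (if y ≤ 0 then (1:ℝ) else 0) := by
    by_cases hc : a*x + b*y ≤ 0
    · rw [if_pos hc]
      have hax : a * x = 0 := by nlinarith [mul_nonneg ha hx.1, mul_nonneg hb hy.1]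
      have hby : b * y = 0 := by nlinarith [mul_nonneg ha hx.1, mul_nonneg hb hy.1]
      have e1 : a * (if x ≤ 0 then (1:ℝ) else 0) = a := by
        rcases mul_eq_zero.mp hax with h | h
        · simp [h]
        · simp [h.le]
      have e2 : b * (if y ≤ 0 then (1:ℝ) else 0) = b := by
        rcases mul_eq_zero.mp hby with h | h
        · simp [h]
        · simp [h.le]
      rw [e1, e2, hab]
    · rw [if_neg hc]
      have i1 : (0:ℝ) ≤ (if x ≤ 0 then (1:ℝ) else 0) := by positivity
      have i2 : (0:ℝ) ≤ (if y ≤ 0 then (1:ℝ) else 0) := by positivity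
      nlinarith
  nlinarith
lemma derivWithin_wmg_Iio {γ p : ℝ} (hp : p ∈ Ioo (0:ℝ) 1) :
    derivWithin (wmg γ) (Iio p) p = γ := by
  have he : EqOn (wmg γ) (fun q => γ * q) (Iio p) := by
    intro q hq
    exact wmg_of_lt_one ((mem_Iio.mp hq).trans hp.2)
  rw [derivWithin_congr he (wmg_of_lt_one hp.2)]
  have : HasDerivWithinAt (fun q : ℝ => γ * q) (γ * 1) (Iio p) p :=
    ((hasDerivAt_id p).const_mul γ).hasDerivWithinAt
  rw [this.derivWithin (uniqueDiffWithinAt_Iio p), mul_one]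

lemma derivWithin_wpdual_Ioi {p : ℝ} (hp : p ∈ Ioo (0:ℝ) 1) :
    derivWithin (fun q => 1 - wp0 (1 - q)) (Ioi p) p = 1/2 := by
  have hmem : Ioo p 1 ∈ 𝓝[>] p := Ioo_mem_nhdsGT_of_mem ⟨le_refl p, hp.2⟩
  have he : (fun q => 1 - wp0 (1 - q)) =ᶠ[𝓝[>] p] (fun q => q / 2) := by
    filter_upwards [hmem] with q hq
    rw [wp0_of_pos (by linarith [hq.2] : (0:ℝ) < 1 - q)]
    ring
  have hval : 1 - wp0 (1 - p) = p / 2 := by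
    rw [wp0_of_pos (by linarith [hp.2] : (0:ℝ) < 1 - p)]; ring
  rw [he.derivWithin_eq hval]
  have : HasDerivWithinAt (fun q : ℝ => q / 2) (1 / 2) (Ioi p) p :=
    ((hasDerivAt_id p).div_const 2).hasDerivWithinAt
  rw [this.derivWithin (uniqueDiffWithinAt_Ioi p)]

lemma derivWithin_id_Ioi (x : ℝ) : derivWithin (id : ℝ → ℝ) (Ioi x) x = 1 :=
  derivWithin_id x _ (uniqueDiffWithinAt_Ioi x)

lemma derivWithin_id_Iio (x : ℝ) : derivWithin (id : ℝ → ℝ) (Iio x) x = 1 :=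
  derivWithin_id x _ (uniqueDiffWithinAt_Iio x)
lemma integrableOn_aux {f : ℝ → ℝ} (hmono : Antitone f) (h0 : ∀ t, 0 ≤ f t)
    (h1 : ∀ t, f t ≤ 1) {B : ℝ} (hsupp : ∀ t, B < t → f t = 0) :
    IntegrableOn f (Ioi 0) (volume) := by
  have hmeas := hmono.measurable
  refine Integrable.mono' (g := fun t => (Ioc (0:ℝ) B).indicator (fun _ => (1:ℝ)) t)
    ?_ hmeas.aestronglyMeasurable ?_
  · exact (((integrable_indicator_iff measurableSet_Ioc).2
      (integrableOn_const measure_Ioc_lt_top.ne))).restrict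
  · refine (ae_restrict_iff' measurableSet_Ioi).2 (ae_of_all _ fun t ht => ?_)
    rw [Real.norm_eq_abs, abs_of_nonneg (h0 t)]
    rcases le_or_gt t B with h | h
    · have hmem : t ∈ Ioc (0:ℝ) B := ⟨ht, h⟩
      rw [Set.indicator_of_mem hmem]
      exact h1 t
    · rw [hsupp t h]
      exact Set.indicator_nonneg (fun _ _ => zero_le_one) t

lemma integral_upper {f : ℝ → ℝ} (hint : IntegrableOn f (Ioi 0) volume)
    {c d : ℝ} (hc : 0 ≤ c) (hd : 0 ≤ d)
    (hb : ∀ t, 0 < t → f t ≤ d) (h0 : ∀ t, 0 < t → 0 ≤ f t)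
    (hsupp : ∀ t, c < t → f t = 0) :
    ∫ t in Ioi (0:ℝ), f t ≤ d * c := by
  have hsplit : (Ioc (0:ℝ) c) ∪ (Ioi c) = Ioi 0 := Ioc_union_Ioi_eq_Ioi hc
  have hdisj : Disjoint (Ioc (0:ℝ) c) (Ioi c) := Ioc_disjoint_Ioi le_rfl
  have h2 : ∫ t in Ioi c, f t = 0 := by
    rw [setIntegral_congr_fun measurableSet_Ioi (fun t ht => hsupp t ht)]
    exact integral_zero _ _
  have h1' : ∫ t in Ioc (0:ℝ) c, f t ≤ d * c := by
    calc ∫ t in Ioc (0:ℝ) c, f t ≤ ∫ _ in Ioc (0:ℝ) c, d := by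
          refine setIntegral_mono_on (hint.mono_set ?_) (integrableOn_const measure_Ioc_lt_top.ne) measurableSet_Ioc (fun t ht => hb t ht.1)
          rw [← hsplit]; exact subset_union_left
      _ = d * c := by
          rw [setIntegral_const, Real.volume_real_Ioc_of_le hc, smul_eq_mul, mul_comm]
          ring_nf
  calc ∫ t in Ioi (0:ℝ), f t
      = (∫ t in Ioc (0:ℝ) c, f t) + ∫ t in Ioi c, f t := by
        rw [← setIntegral_union hdisj measurableSet_Ioi
          (hint.mono_set (by rw [← hsplit]; exact subset_union_left))
          (hint.mono_set (by rw [← hsplit]; exact subset_union_right)), hsplit]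
    _ ≤ d * c := by rw [h2]; linarith

lemma integral_lower {f : ℝ → ℝ} (hint : IntegrableOn f (Ioi 0) volume)
    (h0 : ∀ t, 0 < t → 0 ≤ f t) {c d : ℝ} (hc : 0 ≤ c) (hd : 0 ≤ d)
    (hb : ∀ t, t ∈ Ioc (0:ℝ) c → d ≤ f t) :
    d * c ≤ ∫ t in Ioi (0:ℝ), f t := by
  have hsub : Ioc (0:ℝ) c ⊆ Ioi 0 := Ioc_subset_Ioi_self
  have step1 : d * c ≤ ∫ t in Ioc (0:ℝ) c, f t := by
    calc d * c = ∫ _ in Ioc (0:ℝ) c, d := by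
          rw [setIntegral_const, Real.volume_real_Ioc_of_le hc, smul_eq_mul]
          ring_nf
      _ ≤ ∫ t in Ioc (0:ℝ) c, f t :=
          setIntegral_mono_on (integrableOn_const measure_Ioc_lt_top.ne)
            (hint.mono_set hsub) measurableSet_Ioc (fun t ht => hb t ht)
  refine step1.trans (setIntegral_mono_set hint ?_ (HasSubset.Subset.eventuallyLE hsub))
  exact (ae_restrict_iff' measurableSet_Ioi).2 (ae_of_all _ fun t ht => h0 t ht)


section Measure
variable {Ω : Type*} [MeasurableSpace Ω] (P : Measure Ω) [IsProbabilityMeasure P]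

lemma ptoReal_le_one (s : Set Ω) : (P s).toReal ≤ 1 :=
  ENNReal.toReal_mono ENNReal.one_ne_top prob_le_one

lemma ptoReal_mono {s t : Set Ω} (h : s ⊆ t) : (P s).toReal ≤ (P t).toReal :=
  ENNReal.toReal_mono (measure_ne_top P t) (measure_mono h)

lemma cptE_nonpos_of_null {v wm wp : ℝ → ℝ} (hv : IsValueFun v)
    (hwm : IsWeightFun wm) (hwp : IsWeightFun wp) (ζ : Ω → ℝ) (x : ℝ)
    (h0 : P {ω | x < ζ ω} = 0) :
    cptE P v wm wp (fun ω => ζ ω - x) ≤ 0 := by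
  simp only [cptE]
  have h1 : EqOn (fun t => wp ((P {ω | t ≤ v (ζ ω - x)}).toReal)) (fun _ => (0:ℝ))
      (Ioi (0:ℝ)) := by
    intro t ht
    have hsub : {ω | t ≤ v (ζ ω - x)} ⊆ {ω | x < ζ ω} := by
      intro ω hω
      by_contra hc
      simp only [mem_setOf_eq, not_lt] at hc
      have hω' : t ≤ v (ζ ω - x) := hω
      have : v (ζ ω - x) ≤ v 0 := hv.1.monotone (by linarith)
      rw [hv.2] at this
      exact absurd (lt_of_lt_of_le (mem_Ioi.mp ht) (le_trans hω' this)) (lt_irrefl 0)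
    have hnull := measure_mono_null hsub h0
    simp only [hnull, ENNReal.toReal_zero]
    exact hwp.2.2.1
  rw [setIntegral_congr_fun measurableSet_Ioi h1, integral_zero]
  have h2 : 0 ≤ ∫ t in Ioi (0:ℝ), wm ((P {ω | v (ζ ω - x) ≤ -t}).toReal) :=
    setIntegral_nonneg measurableSet_Ioi fun t _ =>
      (hwm.2.1 ⟨ENNReal.toReal_nonneg, ptoReal_le_one P _⟩).1
  linarith

lemma cptE_tuple0_pos {ζ : Ω → ℝ} {M : ℝ} (hM : ∀ ω, |ζ ω| ≤ M) {x : ℝ}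
    (hx : P {ω | x < ζ ω} ≠ 0) :
    0 < cptE P v0 id wp0 (fun ω => ζ ω - x) := by
  have hq : 0 < (P {ω | x < ζ ω}).toReal := ENNReal.toReal_pos hx (measure_ne_top _ _)
  set F : ℝ → ℝ := fun t => wp0 ((P {ω | t ≤ v0 (ζ ω - x)}).toReal) with hF
  set N : ℝ → ℝ := fun t => (P {ω | v0 (ζ ω - x) ≤ -t}).toReal with hN
  have hFanti : Antitone F := fun a b hab =>
    wp0_mono ENNReal.toReal_nonneg (ptoReal_mono P (fun ω hω => le_trans hab hω))
  have hNanti : Antitone N := by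
    intro a b hab
    refine ptoReal_mono P (fun ω hω => ?_)
    have hω' : v0 (ζ ω - x) ≤ -b := hω
    show v0 (ζ ω - x) ≤ -a
    linarith
  have hF0 : ∀ t, 0 ≤ F t := fun t => wp0_nonneg ENNReal.toReal_nonneg
  have hF1 : ∀ t, F t ≤ 1 := fun t => wp0_le_one ENNReal.toReal_nonneg (ptoReal_le_one P _)
  have hFsupp : ∀ t, max (M - x) 0 + 1 < t → F t = 0 := by
    intro t ht
    have hempty : {ω | t ≤ v0 (ζ ω - x)} = ∅ := by
      rw [eq_empty_iff_forall_notMem]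
      intro ω hω
      have h1 : ζ ω - x ≤ max (M - x) 0 :=
        le_max_of_le_left (by linarith [(abs_le.mp (hM ω)).2])
      have hω' : t ≤ v0 (ζ ω - x) := hω
      have h2 : v0 (ζ ω - x) ≤ max (M - x) 0 + 1 := by
        rcases eq_or_lt_of_le (le_max_right (M - x) 0) with h | h
        · calc v0 (ζ ω - x) ≤ v0 0 := v0_strictMono.monotone (by rw [← h] at h1; exact h1)
            _ = 0 := v0_zero
            _ ≤ max (M - x) 0 + 1 := by positivity
        · calc v0 (ζ ω - x) ≤ v0 (max (M - x) 0) := v0_strictMono.monotone h1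
            _ = max (M - x) 0 + 1 := v0_of_pos h
      exact absurd (le_trans hω' h2) (not_le.mpr ht)
    simp only [hF, hempty, measure_empty, ENNReal.toReal_zero, wp0_zero]
  have hFint : IntegrableOn F (Ioi 0) volume := integrableOn_aux hFanti hF0 hF1 hFsupp
  have hNsupp : ∀ t, (1:ℝ)/4 < t → N t = 0 := by
    intro t ht
    have hempty : {ω | v0 (ζ ω - x) ≤ -t} = ∅ := by
      rw [eq_empty_iff_forall_notMem]
      intro ω hω
      have hg := v0_gt (y := ζ ω - x)
      have hlt : -t < v0 (ζ ω - x) := lt_of_le_of_lt (by linarith) hg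
      have hω' : v0 (ζ ω - x) ≤ -t := hω
      exact absurd hω' (not_le.mpr hlt)
    simp only [hN, hempty, measure_empty, ENNReal.toReal_zero]
  have hNint : IntegrableOn N (Ioi 0) volume :=
    integrableOn_aux hNanti (fun t => ENNReal.toReal_nonneg)
      (fun t => ptoReal_le_one P _) hNsupp
  have hlow : (1:ℝ)/2 * 1 ≤ ∫ t in Ioi (0:ℝ), F t := by
    refine integral_lower hFint (fun t _ => hF0 t) zero_le_one (by norm_num) ?_
    intro t ht
    have hsub : {ω | x < ζ ω} ⊆ {ω | t ≤ v0 (ζ ω - x)} := by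
      intro ω hω
      have hω' : x < ζ ω := hω
      have h1 : 0 < ζ ω - x := by linarith
      have : v0 (ζ ω - x) = (ζ ω - x) + 1 := v0_of_pos h1
      simp only [mem_setOf_eq, this]
      linarith [ht.2]
    have : 0 < (P {ω | t ≤ v0 (ζ ω - x)}).toReal :=
      lt_of_lt_of_le hq (ptoReal_mono P hsub)
    exact wp0_half this
  have hupp : ∫ t in Ioi (0:ℝ), N t ≤ 1 * (1/4) := by
    refine integral_upper hNint (by norm_num) zero_le_one
      (fun t _ => ptoReal_le_one P _) (fun t _ => ENNReal.toReal_nonneg) hNsupp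
  have : cptE P v0 id wp0 (fun ω => ζ ω - x)
      = (∫ t in Ioi (0:ℝ), F t) - ∫ t in Ioi (0:ℝ), N t := by
    simp only [cptE, hF, hN, id_eq]
  rw [this]
  linarith

lemma tuple0_set (ζ : Ω → ℝ) {M : ℝ} (hM : ∀ ω, |ζ ω| ≤ M) :
    {x | cptE P v0 id wp0 (fun ω => ζ ω - x) ≤ 0} = {x | P {ω | x < ζ ω} = 0} := by
  ext x
  simp only [mem_setOf_eq]
  constructor
  · intro h
    by_contra hne
    exact absurd h (not_le.mpr (cptE_tuple0_pos P hM hne))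
  · intro h
    exact cptE_nonpos_of_null P ⟨v0_strictMono, v0_zero⟩
      ⟨fun a _ b _ hab => hab, fun p hp => hp, rfl, rfl⟩
      ⟨isWeightFun_wp0.1, isWeightFun_wp0.2.1, isWeightFun_wp0.2.2⟩ ζ x h

end Measure

section ESet
variable {Ω : Type*} [MeasurableSpace Ω] (P : Measure Ω) [IsProbabilityMeasure P]

/-- The acceptance set of the essential supremum. -/
def eset (ζ : Ω → ℝ) : Set ℝ := {x | P {ω | x < ζ ω} = 0}

lemma eset_mem {ζ : Ω → ℝ} {M : ℝ} (hM : ∀ ω, |ζ ω| ≤ M) : M ∈ eset P ζ := by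
  have : {ω | M < ζ ω} = ∅ := by
    rw [eq_empty_iff_forall_notMem]
    intro ω hω
    have hω' : M < ζ ω := hω
    linarith [(abs_le.mp (hM ω)).2]
  simp [eset, this]

lemma eset_nonempty {ζ : Ω → ℝ} {M : ℝ} (hM : ∀ ω, |ζ ω| ≤ M) :
    (eset P ζ).Nonempty := ⟨M, eset_mem P hM⟩

lemma eset_bddBelow {ζ : Ω → ℝ} {M : ℝ} (hM : ∀ ω, |ζ ω| ≤ M) :
    BddBelow (eset P ζ) := by
  refine ⟨-M - 1, fun x hx => ?_⟩
  by_contra hc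
  push_neg at hc
  have huniv : {ω | x < ζ ω} = univ := by
    rw [eq_univ_iff_forall]
    intro ω
    have := (abs_le.mp (hM ω)).1
    show x < ζ ω
    linarith
  have h1 : P {ω | x < ζ ω} = 1 := by rw [huniv]; exact measure_univ
  have hx' : P {ω | x < ζ ω} = 0 := hx
  rw [h1] at hx'
  exact one_ne_zero hx'

lemma coe_sInf_image {A : Set ℝ} (hne : A.Nonempty) (hbdd : BddBelow A) :
    sInf ((fun x : ℝ => (x : EReal)) '' A) = ((sInf A : ℝ) : EReal) :=
  (Monotone.map_csInf_of_continuousAt (continuous_coe_real_ereal.continuousAt)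
    (EReal.coe_strictMono.monotone) hne hbdd).symm

lemma gsr_tuple0_eq {ζ : Ω → ℝ} {M : ℝ} (hM : ∀ ω, |ζ ω| ≤ M) :
    gsr P v0 id wp0 ζ = ((sInf (eset P ζ) : ℝ) : EReal) := by
  rw [gsr]
  have h := tuple0_set P ζ hM
  rw [show {x | cptE P v0 id wp0 (fun ω => ζ ω - x) ≤ 0} = eset P ζ from h]
  exact coe_sInf_image (eset_nonempty P hM) (eset_bddBelow P hM)

lemma sInf_shift {A : Set ℝ} (hne : A.Nonempty) (hbdd : BddBelow A) (c : ℝ) :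
    sInf {x | x - c ∈ A} = sInf A + c := by
  have hne' : {x | x - c ∈ A}.Nonempty := by
    obtain ⟨a, ha⟩ := hne
    exact ⟨a + c, by simp [ha]⟩
  have hbdd' : BddBelow {x | x - c ∈ A} := by
    obtain ⟨m, hm⟩ := hbdd
    exact ⟨m + c, fun x hx => by linarith [hm hx]⟩
  apply le_antisymm
  · have h1 : ∀ a ∈ A, sInf {x | x - c ∈ A} ≤ a + c := fun a ha =>
      csInf_le hbdd' (by simp [ha])
    have h2 : sInf {x | x - c ∈ A} - c ≤ sInf A :=
      le_csInf hne fun a ha => by linarith [h1 a ha]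
    linarith
  · refine le_csInf hne' fun b hb => ?_
    have : sInf A ≤ b - c := csInf_le hbdd hb
    linarith

end ESet

section ConvexRM
variable {Ω : Type*} [MeasurableSpace Ω] (P : Measure Ω) [IsProbabilityMeasure P]

lemma tuple0_convexRM :
    IsConvexRM (fun ζ : Ω → ℝ => gsr P v0 id wp0 ζ) := by
  refine ⟨?_, ?_, ?_⟩
  · -- monotone
    rintro ζ η ⟨-, Mζ, hMζ⟩ ⟨-, Mη, hMη⟩ hle
    show gsr P v0 id wp0 ζ ≤ gsr P v0 id wp0 η
    rw [gsr_tuple0_eq P hMζ, gsr_tuple0_eq P hMη, EReal.coe_le_coe_iff]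
    refine csInf_le_csInf (eset_bddBelow P hMζ) (eset_nonempty P hMη) ?_
    intro x hx
    have hx' : P {ω | x < η ω} = 0 := hx
    show P {ω | x < ζ ω} = 0
    refine measure_mono_null ?_ hx'
    intro ω hω
    have hω' : x < ζ ω := hω
    exact lt_of_lt_of_le hω' (hle ω)
  · -- translation invariance
    rintro ζ ⟨-, M, hM⟩ c
    have hM' : ∀ ω, |ζ ω + c| ≤ M + |c| := fun ω =>
      (abs_add_le _ _).trans (add_le_add_left (hM ω) _)
    show gsr P v0 id wp0 (fun ω => ζ ω + c) = gsr P v0 id wp0 ζ + (c : EReal)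
    rw [gsr_tuple0_eq P hM', gsr_tuple0_eq P hM]
    have hset : eset P (fun ω => ζ ω + c) = {x | x - c ∈ eset P ζ} := by
      ext x
      show P {ω | x < ζ ω + c} = 0 ↔ P {ω | x - c < ζ ω} = 0
      have : {ω | x < ζ ω + c} = {ω | x - c < ζ ω} := by
        ext ω; simp only [mem_setOf_eq]; constructor <;> intro <;> linarith
      rw [this]
    rw [hset, sInf_shift (eset_nonempty P hM) (eset_bddBelow P hM) c]
    rw [EReal.coe_add]
  · -- convexity
    rintro ζ η ⟨-, Mζ, hMζ⟩ ⟨-, Mη, hMη⟩ l hl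
    set Mζ' := max Mζ 0 with hMζ'def
    set Mη' := max Mη 0 with hMη'def
    have hMζ' : ∀ ω, |ζ ω| ≤ Mζ' := fun ω => (hMζ ω).trans (le_max_left _ _)
    have hMη' : ∀ ω, |η ω| ≤ Mη' := fun ω => (hMη ω).trans (le_max_left _ _)
    have hMc : ∀ ω, |l * ζ ω + (1 - l) * η ω| ≤ Mζ' + Mη' := by
      intro ω
      have h1 : |l * ζ ω| ≤ Mζ' := by
        rw [abs_mul, abs_of_nonneg hl.1]
        calc l * |ζ ω| ≤ 1 * Mζ' :=
            mul_le_mul hl.2 (hMζ' ω) (abs_nonneg _) zero_le_one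
          _ = Mζ' := one_mul _
      have h2 : |(1 - l) * η ω| ≤ Mη' := by
        rw [abs_mul, abs_of_nonneg (by linarith [hl.2] : (0:ℝ) ≤ 1 - l)]
        calc (1 - l) * |η ω| ≤ 1 * Mη' :=
            mul_le_mul (by linarith [hl.1]) (hMη' ω) (abs_nonneg _) zero_le_one
          _ = Mη' := one_mul _
      calc |l * ζ ω + (1 - l) * η ω| ≤ |l * ζ ω| + |(1 - l) * η ω| := abs_add_le _ _
        _ ≤ Mζ' + Mη' := add_le_add h1 h2
    show gsr P v0 id wp0 (fun ω => l * ζ ω + (1 - l) * η ω)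
      ≤ (l : EReal) * gsr P v0 id wp0 ζ + ((1 - l : ℝ) : EReal) * gsr P v0 id wp0 η
    rw [gsr_tuple0_eq P hMc, gsr_tuple0_eq P hMζ', gsr_tuple0_eq P hMη',
      ← EReal.coe_mul, ← EReal.coe_mul, ← EReal.coe_add, EReal.coe_le_coe_iff]
    set a := sInf (eset P ζ)
    set b := sInf (eset P η)
    refine le_of_forall_pos_le_add fun ε hε => ?_
    obtain ⟨u, hu, hult⟩ := Real.lt_sInf_add_pos (eset_nonempty P hMζ') hε
    obtain ⟨w, hw, hwlt⟩ := Real.lt_sInf_add_pos (eset_nonempty P hMη') hε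
    have hmem : l * u + (1 - l) * w ∈ eset P (fun ω => l * ζ ω + (1 - l) * η ω) := by
      show P {ω | l * u + (1 - l) * w < l * ζ ω + (1 - l) * η ω} = 0
      have hsub : {ω | l * u + (1 - l) * w < l * ζ ω + (1 - l) * η ω}
          ⊆ {ω | u < ζ ω} ∪ {ω | w < η ω} := by
        intro ω hω
        have hω' : l * u + (1 - l) * w < l * ζ ω + (1 - l) * η ω := hω
        by_contra hc
        simp only [mem_union, mem_setOf_eq, not_or, not_lt] at hc
        have h1 : l * ζ ω ≤ l * u := mul_le_mul_of_nonneg_left hc.1 hl.1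
        have h2 : (1 - l) * η ω ≤ (1 - l) * w :=
          mul_le_mul_of_nonneg_left hc.2 (by linarith [hl.2])
        linarith
      exact measure_mono_null hsub (measure_union_null hu hw)
    have hle := csInf_le (eset_bddBelow P hMc) hmem
    calc sInf (eset P fun ω => l * ζ ω + (1 - l) * η ω)
        ≤ l * u + (1 - l) * w := hle
      _ ≤ l * (a + ε) + (1 - l) * (b + ε) := by
          refine add_le_add (mul_le_mul_of_nonneg_left hult.le hl.1)
            (mul_le_mul_of_nonneg_left hwlt.le (by linarith [hl.2]))
      _ = l * a + (1 - l) * b + ε := by ring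
end ConvexRM

lemma family_mem {γ : ℝ} (h0 : 0 < γ) (h1 : γ ≤ 1/4) :
    ((id : ℝ → ℝ), wmg γ, wp0) ∈ convexTuples := by
  refine ⟨⟨strictMono_id, rfl⟩, convexOn_id (convex_Iic 0), convexOn_id (convex_Ici 0),
    isWeightFun_wmg h0 h1, convexOn_wmg h0.le (by linarith), isWeightFun_wp0,
    concaveOn_wp0, ?_⟩
  have hterm : ∀ p : Ioo (0:ℝ) 1,
      leftD (wmg γ) ↑p / rightD (fun q => 1 - wp0 (1 - q)) ↑p = 2 * γ := by
    intro p
    rw [leftD, rightD, derivWithin_wmg_Iio p.2, derivWithin_wpdual_Ioi p.2]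
    norm_num
    ring
  rw [iSup_congr hterm]
  haveI : Nonempty (Ioo (0:ℝ) 1) := ⟨⟨1/2, by norm_num⟩⟩
  rw [ciSup_const]
  show (2 * γ : ℝ) ≤ rightD (id : ℝ → ℝ) 0 / leftD (id : ℝ → ℝ) 0
  rw [rightD, leftD, derivWithin_id_Ioi, derivWithin_id_Iio]
  norm_num
  linarith

section Robust
variable {Ω : Type*} [MeasurableSpace Ω] (P : Measure Ω) [IsProbabilityMeasure P]

lemma robust_null {ξ : Ω → ℝ} (hmeas : Measurable ξ) {M : ℝ} (hM : ∀ ω, |ξ ω| ≤ M)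
    {x : ℝ}
    (hx : ∀ vw ∈ convexTuples, cptE P vw.1 vw.2.1 vw.2.2 (fun ω => ξ ω - x) ≤ 0) :
    P {ω | x < ξ ω} = 0 := by
  by_contra hne
  have hU : {ω | x < ξ ω} ⊆ ⋃ n : ℕ, {ω | x + 1/((n:ℝ)+1) ≤ ξ ω} := by
    intro ω hω
    have hω' : x < ξ ω := hω
    obtain ⟨n, hn⟩ := exists_nat_one_div_lt (show (0:ℝ) < ξ ω - x by linarith)
    refine mem_iUnion.mpr ⟨n, ?_⟩
    show x + 1/((n:ℝ)+1) ≤ ξ ω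
    linarith
  have hex : ¬ ∀ n : ℕ, P {ω | x + 1/((n:ℝ)+1) ≤ ξ ω} = 0 := fun hall =>
    hne (measure_mono_null hU (measure_iUnion_null hall))
  push_neg at hex
  obtain ⟨n, hn⟩ := hex
  set ε : ℝ := 1/((n:ℝ)+1) with hεdef
  have hε : 0 < ε := by positivity
  have hq : 0 < (P {ω | x + ε ≤ ξ ω}).toReal := ENNReal.toReal_pos hn (measure_ne_top _ _)
  set C : ℝ := max (x + M) 0 + 1 with hCdef
  have hC : 0 < C := by positivity
  set γ : ℝ := min (1/4 : ℝ) (ε/(4*C)) with hγdef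
  have hγ0 : 0 < γ := lt_min (by norm_num) (by positivity)
  have hγ1 : γ ≤ 1/4 := min_le_left _ _
  have hγC : γ * C ≤ ε/4 := by
    have h1 : γ ≤ ε/(4*C) := min_le_right _ _
    calc γ * C ≤ (ε/(4*C)) * C := mul_le_mul_of_nonneg_right h1 hC.le
      _ = ε/4 := by field_simp
  have hcpt := hx _ (family_mem hγ0 hγ1)
  have hid : cptE P (id : ℝ → ℝ) (wmg γ) wp0 (fun ω => ξ ω - x)
      = (∫ t in Ioi (0:ℝ), wp0 ((P {ω | t ≤ ξ ω - x}).toReal))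
        - ∫ t in Ioi (0:ℝ), wmg γ ((P {ω | ξ ω - x ≤ -t}).toReal) := by
    simp only [cptE, id_eq]
  set F : ℝ → ℝ := fun t => wp0 ((P {ω | t ≤ ξ ω - x}).toReal) with hF
  set N : ℝ → ℝ := fun t => wmg γ ((P {ω | ξ ω - x ≤ -t}).toReal) with hN
  -- properties of F
  have hFanti : Antitone F := fun a b hab =>
    wp0_mono ENNReal.toReal_nonneg (ptoReal_mono P (fun ω hω => le_trans hab hω))
  have hFsupp : ∀ t, max (M - x) 0 < t → F t = 0 := by
    intro t ht
    have hempty : {ω | t ≤ ξ ω - x} = ∅ := by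
      rw [eq_empty_iff_forall_notMem]
      intro ω hω
      have hω' : t ≤ ξ ω - x := hω
      have : ξ ω - x ≤ max (M - x) 0 :=
        le_max_of_le_left (by linarith [(abs_le.mp (hM ω)).2])
      linarith
    simp only [hF, hempty, measure_empty, ENNReal.toReal_zero, wp0_zero]
  have hFint : IntegrableOn F (Ioi 0) volume :=
    integrableOn_aux hFanti (fun t => wp0_nonneg ENNReal.toReal_nonneg)
      (fun t => wp0_le_one ENNReal.toReal_nonneg (ptoReal_le_one P _)) hFsupp
  have hFlow : (1:ℝ)/2 * ε ≤ ∫ t in Ioi (0:ℝ), F t := by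
    refine integral_lower hFint (fun t _ => wp0_nonneg ENNReal.toReal_nonneg) hε.le
      (by norm_num) ?_
    intro t ht
    have hsub : {ω | x + ε ≤ ξ ω} ⊆ {ω | t ≤ ξ ω - x} := by
      intro ω hω
      have hω' : x + ε ≤ ξ ω := hω
      show t ≤ ξ ω - x
      linarith [ht.2]
    exact wp0_half (lt_of_lt_of_le hq (ptoReal_mono P hsub))
  -- properties of N
  have hs : MeasurableSet {ω | x + ε ≤ ξ ω} := hmeas measurableSet_Ici
  have hplt : ∀ t : ℝ, 0 < t → (P {ω | ξ ω - x ≤ -t}).toReal < 1 := by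
    intro t ht
    have hsub : {ω | ξ ω - x ≤ -t} ⊆ {ω | x + ε ≤ ξ ω}ᶜ := by
      intro ω hω
      have hω' : ξ ω - x ≤ -t := hω
      simp only [mem_compl_iff, mem_setOf_eq, not_le]
      linarith
    have hlt : P {ω | ξ ω - x ≤ -t} < 1 := by
      calc P {ω | ξ ω - x ≤ -t} ≤ P ({ω | x + ε ≤ ξ ω}ᶜ) := measure_mono hsub
        _ = 1 - P {ω | x + ε ≤ ξ ω} := prob_compl_eq_one_sub hs
        _ < 1 := ENNReal.sub_lt_self ENNReal.one_ne_top one_ne_zero hn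
    have := ENNReal.toReal_lt_toReal (measure_ne_top P _) ENNReal.one_ne_top |>.mpr hlt
    simpa using this
  have hNanti : Antitone N := by
    intro a b hab
    refine wmg_mono hγ0.le (by linarith) (ptoReal_mono P (fun ω hω => ?_))
    have hω' : ξ ω - x ≤ -b := hω
    show ξ ω - x ≤ -a
    linarith
  have hNsupp : ∀ t, max (x + M) 0 < t → N t = 0 := by
    intro t ht
    have hempty : {ω | ξ ω - x ≤ -t} = ∅ := by
      rw [eq_empty_iff_forall_notMem]
      intro ω hω
      have hω' : ξ ω - x ≤ -t := hω
      have h1 : x + M < t := lt_of_le_of_lt (le_max_left _ _) ht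
      linarith [(abs_le.mp (hM ω)).1]
    simp only [hN, hempty, measure_empty, ENNReal.toReal_zero, wmg_zero]
  have hNint : IntegrableOn N (Ioi 0) volume :=
    integrableOn_aux hNanti
      (fun t => wmg_nonneg hγ0.le (by linarith) ENNReal.toReal_nonneg)
      (fun t => wmg_le_one hγ0.le (by linarith) ENNReal.toReal_nonneg (ptoReal_le_one P _))
      hNsupp
  have hNupp : ∫ t in Ioi (0:ℝ), N t ≤ γ * max (x + M) 0 := by
    refine integral_upper hNint (le_max_right _ _) hγ0.le ?_
      (fun t _ => wmg_nonneg hγ0.le (by linarith) ENNReal.toReal_nonneg) hNsupp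
    intro t ht
    have := hplt t ht
    rw [show N t = wmg γ ((P {ω | ξ ω - x ≤ -t}).toReal) from rfl, wmg_of_lt_one this]
    nlinarith [ENNReal.toReal_nonneg (a := P {ω | ξ ω - x ≤ -t})]
  have hNC : γ * max (x + M) 0 ≤ ε/4 := by
    have : max (x + M) 0 ≤ C := by rw [hCdef]; linarith
    nlinarith
  rw [hid] at hcpt
  have : (0:ℝ) < (∫ t in Ioi (0:ℝ), F t) - ∫ t in Ioi (0:ℝ), N t := by
    have := hFlow
    have := hNupp
    nlinarith
  rw [show (∫ t in Ioi (0:ℝ), wp0 ((P {ω | t ≤ ξ ω - x}).toReal)) = ∫ t in Ioi (0:ℝ), F t from rfl,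
    show (∫ t in Ioi (0:ℝ), wmg γ ((P {ω | ξ ω - x ≤ -t}).toReal)) = ∫ t in Ioi (0:ℝ), N t from rfl] at hcpt
  linarith

end Robust

end PRGSRaux

/-- the robust shortfall risk over the set `T` equals the
supremum of the GSR-CPT over all tuples inducing a convex risk measure. -/
theorem prgsr_convex {Ω : Type*} [MeasurableSpace Ω] (P : Measure Ω)
    [IsProbabilityMeasure P]
    (ξ : Ω → ℝ) (hξ : IsBddRV ξ) :
    sInf ((fun x : ℝ => (x : EReal)) ''
        {x : ℝ | ∀ vw ∈ convexTuples,
          cptE P vw.1 vw.2.1 vw.2.2 (fun ω => ξ ω - x) ≤ 0})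
      = ⨆ vw ∈ {vw : (ℝ → ℝ) × (ℝ → ℝ) × (ℝ → ℝ) |
            IsValueFun vw.1 ∧ IsWeightFun vw.2.1 ∧ IsWeightFun vw.2.2 ∧
            IsConvexRM (fun ζ : Ω → ℝ => gsr P vw.1 vw.2.1 vw.2.2 ζ)},
          gsr P vw.1 vw.2.1 vw.2.2 ξ := by
  classical
  obtain ⟨hmeas, M0, hM0⟩ := hξ
  have hM : ∀ ω, |ξ ω| ≤ max M0 0 := fun ω => (hM0 ω).trans (le_max_left _ _)
  have hset : {x : ℝ | ∀ vw ∈ convexTuples,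
      cptE P vw.1 vw.2.1 vw.2.2 (fun ω => ξ ω - x) ≤ 0} = PRGSRaux.eset P ξ := by
    ext x
    simp only [mem_setOf_eq]
    constructor
    · intro h
      exact PRGSRaux.robust_null P hmeas hM h
    · intro h vw hvw
      obtain ⟨hv, -, -, hwm, -, hwp, -, -⟩ := hvw
      exact PRGSRaux.cptE_nonpos_of_null P hv hwm hwp ξ x h
  rw [hset, PRGSRaux.coe_sInf_image (PRGSRaux.eset_nonempty P hM)
    (PRGSRaux.eset_bddBelow P hM)]
  apply le_antisymm
  · have hmem0 : ((PRGSRaux.v0, (id : ℝ → ℝ), PRGSRaux.wp0) : (ℝ → ℝ) × (ℝ → ℝ) × (ℝ → ℝ))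
        ∈ {vw : (ℝ → ℝ) × (ℝ → ℝ) × (ℝ → ℝ) |
            IsValueFun vw.1 ∧ IsWeightFun vw.2.1 ∧ IsWeightFun vw.2.2 ∧
            IsConvexRM (fun ζ : Ω → ℝ => gsr P vw.1 vw.2.1 vw.2.2 ζ)} := by
      refine ⟨⟨PRGSRaux.v0_strictMono, PRGSRaux.v0_zero⟩,
        ⟨fun a _ b _ hab => hab, fun p hp => hp, rfl, rfl⟩,
        ⟨PRGSRaux.isWeightFun_wp0.1, PRGSRaux.isWeightFun_wp0.2.1,
          PRGSRaux.isWeightFun_wp0.2.2⟩, ?_⟩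
      exact PRGSRaux.tuple0_convexRM P
    have heq : ((sInf (PRGSRaux.eset P ξ) : ℝ) : EReal)
        = gsr P PRGSRaux.v0 id PRGSRaux.wp0 ξ := (PRGSRaux.gsr_tuple0_eq P hM).symm
    rw [heq]
    exact le_iSup₂ (f := fun vw (_ : vw ∈ {vw : (ℝ → ℝ) × (ℝ → ℝ) × (ℝ → ℝ) |
            IsValueFun vw.1 ∧ IsWeightFun vw.2.1 ∧ IsWeightFun vw.2.2 ∧
            IsConvexRM (fun ζ : Ω → ℝ => gsr P vw.1 vw.2.1 vw.2.2 ζ)}) =>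
        gsr P vw.1 vw.2.1 vw.2.2 ξ) _ hmem0
  · refine iSup₂_le fun vw hvw => ?_
    obtain ⟨hv, hwm, hwp, -⟩ := hvw
    have hsub : PRGSRaux.eset P ξ
        ⊆ {x : ℝ | cptE P vw.1 vw.2.1 vw.2.2 (fun ω => ξ ω - x) ≤ 0} :=
      fun x hx => PRGSRaux.cptE_nonpos_of_null P hv hwm hwp ξ x hx
    calc gsr P vw.1 vw.2.1 vw.2.2 ξ
        ≤ sInf ((fun x : ℝ => (x : EReal)) '' PRGSRaux.eset P ξ) :=
          sInf_le_sInf (image_mono hsub)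
      _ = ((sInf (PRGSRaux.eset P ξ) : ℝ) : EReal) :=
          PRGSRaux.coe_sInf_image (PRGSRaux.eset_nonempty P hM)
            (PRGSRaux.eset_bddBelow P hM)
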